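/- arXiv:2302.02091 — 3 statements merged into one kernel-verified Lean document; each statement's English description precedes it below -/
import Mathlib

section
/- Necessity in Theorem 1(i): Let θ > 0, T ∈ ℕ with T ≥ 1, and let y ∈ ℝ be the common weighted input. Assume the SNN satisfies φ(T) = y − (v(T) − θ/2)/T (the conversion identity with initial potential v(0) = θ/2), φ(T) ∈ { θ·i/T : 0 ≤ i ≤ T }, and the ANN output is a = f(y) where f is the QCFS activation with L = T and λ = θ. If a = 0 and φ(T) > a, then v(T) < 0. -/
/-- QCFS activation function. -/
noncomputable def qcfs (lam : ℝ) (L : ℕ) (y : ℝ) : ℝ :=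
  lam * min (max ((1 / (L : ℝ)) * (⌊y * (L : ℝ) / lam + 1 / 2⌋ : ℝ)) 0) 1

theorem necessity_case_zero (θ : ℝ) (T : ℕ) (y a φ vT : ℝ)
    (hθ : 0 < θ) (hT : 1 ≤ T)
    (hid : φ = y - (vT - θ / 2) / (T : ℝ))
    (hφ : ∃ i : ℕ, i ≤ T ∧ φ = θ * (i : ℝ) / (T : ℝ))
    (ha : a = qcfs θ T y) (ha0 : a = 0) (hgt : φ > a) :
    vT < 0 := by
  have hTpos : (0:ℝ) < (T:ℝ) := by exact_mod_cast hT
  -- from a = 0 deduce floor ≤ 0, hence y*T/θ + 1/2 < 1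
  rw [ha0] at ha hgt
  have hmin : min (max ((1 / (T : ℝ)) * (⌊y * (T : ℝ) / θ + 1 / 2⌋ : ℝ)) 0) 1 = 0 := by
    have := ha.symm
    unfold qcfs at this
    rcases mul_eq_zero.mp this with h | h
    · exact absurd h (ne_of_gt hθ)
    · exact h
  have hmax : max ((1 / (T : ℝ)) * (⌊y * (T : ℝ) / θ + 1 / 2⌋ : ℝ)) 0 = 0 := by
    rcases min_eq_iff.mp hmin with ⟨h, _⟩ | ⟨h, _⟩
    · exact h
    · linarith
  have hfl : ((⌊y * (T : ℝ) / θ + 1 / 2⌋ : ℤ) : ℝ) ≤ 0 := by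
    by_contra hc
    push_neg at hc
    have : (1 / (T : ℝ)) * (⌊y * (T : ℝ) / θ + 1 / 2⌋ : ℝ) > 0 :=
      mul_pos (by positivity) hc
    have := le_max_left ((1 / (T : ℝ)) * (⌊y * (T : ℝ) / θ + 1 / 2⌋ : ℝ)) 0
    linarith [hmax ▸ this]
  have hfl' : ⌊y * (T : ℝ) / θ + 1 / 2⌋ ≤ 0 := by exact_mod_cast hfl
  have hlt : y * (T : ℝ) / θ + 1 / 2 < 1 := by
    have := Int.lt_floor_add_one (y * (T : ℝ) / θ + 1 / 2)
    have h0 : ((⌊y * (T : ℝ) / θ + 1 / 2⌋ : ℤ) : ℝ) ≤ 0 := hfl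
    linarith
  have hy : y * (T : ℝ) < θ / 2 := by
    have h1 : y * (T : ℝ) / θ < 1 / 2 := by linarith
    have := (div_lt_iff₀ hθ).mp h1
    linarith
  -- φ ≥ θ / T
  obtain ⟨i, hi, hφi⟩ := hφ
  have hipos : 1 ≤ i := by
    by_contra h
    push_neg at h
    interval_cases i
    simp at hφi
    rw [hφi] at hgt
    simp at hgt
  have hφge : θ / (T : ℝ) ≤ φ := by
    rw [hφi]
    have : (1:ℝ) ≤ (i:ℝ) := by exact_mod_cast hipos
    rw [div_le_div_iff₀ hTpos hTpos]
    nlinarith [mul_nonneg (mul_nonneg hθ.le (sub_nonneg.mpr this)) hTpos.le]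
  -- conclude
  have hvT : vT = θ / 2 + (y - φ) * (T : ℝ) := by
    field_simp at hid
    linarith
  rw [hvT]
  have : φ * (T : ℝ) ≥ θ := by
    have := (div_le_iff₀ hTpos).mp hφge
    linarith
  nlinarith
end

section
/- Necessity in Theorem 1(ii): Let θ > 0, T ∈ ℕ with T ≥ 1, and y ∈ ℝ. Assume φ(T) = y − (v(T) − θ/2)/T, φ(T) ∈ { θ·i/T : 0 ≤ i ≤ T }, and a = f(y) = kθ/T for some natural number k with 0 < k < T (so y ∈ [ (θ/T)(k − 1/2), (θ/T)(k + 1/2) )). If φ(T) > a, then v(T) < 0. -/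
theorem necessity_case_mid (θ : ℝ) (T k : ℕ) (y a φ vT : ℝ)
    (hθ : 0 < θ) (hT : 1 ≤ T) (hk0 : 0 < k) (hkT : k < T)
    (hid : φ = y - (vT - θ / 2) / (T : ℝ))
    (hφ : ∃ i : ℕ, i ≤ T ∧ φ = θ * (i : ℝ) / (T : ℝ))
    (ha : a = qcfs θ T y) (hak : a = (k : ℝ) * θ / (T : ℝ))
    (hgt : φ > a) :
    vT < 0 := by
  obtain ⟨i, hiT, hφi⟩ := hφ
  have hTr : (0 : ℝ) < (T : ℝ) := by exact_mod_cast Nat.lt_of_lt_of_le Nat.zero_lt_one hT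
  set m := ⌊y * (T : ℝ) / θ + 1 / 2⌋ with hm
  -- clip value equals k/T
  have hclip : min (max ((1 / (T : ℝ)) * (m : ℝ)) 0) 1 = (k : ℝ) / (T : ℝ) := by
    have h := ha.symm.trans hak
    unfold qcfs at h
    rw [← hm] at h
    have h2 : θ * (min (max ((1 / (T : ℝ)) * (m : ℝ)) 0) 1) = θ * ((k : ℝ) / (T : ℝ)) := by
      rw [h]; ring
    exact mul_left_cancel₀ (ne_of_gt hθ) h2
  have hkT' : (k : ℝ) / (T : ℝ) < 1 := by
    rw [div_lt_one hTr]; exact_mod_cast hkT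
  have hk0' : (0 : ℝ) < (k : ℝ) / (T : ℝ) := by
    apply div_pos _ hTr; exact_mod_cast hk0
  have hmax : max ((1 / (T : ℝ)) * (m : ℝ)) 0 = (k : ℝ) / (T : ℝ) := by
    rcases min_eq_iff.mp hclip with h | h
    · exact h.1
    · linarith [h.1]
  have hmk : (m : ℝ) = (k : ℝ) := by
    rcases max_eq_iff.mp hmax with h | h
    · have := h.1
      field_simp at this
      linarith
    · linarith [h.1]
  have hmk' : m = (k : ℤ) := by exact_mod_cast hmk
  have hfloor : y * (T : ℝ) / θ + 1 / 2 < (k : ℝ) + 1 := by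
    have := Int.lt_floor_add_one (y * (T : ℝ) / θ + 1 / 2)
    rw [← hm, hmk'] at this
    push_cast at this
    linarith
  have hy : y * (T : ℝ) < θ * ((k : ℝ) + 1 / 2) := by
    have h1 : y * (T : ℝ) / θ < (k : ℝ) + 1 / 2 := by linarith
    calc y * (T : ℝ) = (y * (T : ℝ) / θ) * θ := by field_simp
    _ < ((k : ℝ) + 1 / 2) * θ := by exact mul_lt_mul_of_pos_right h1 hθ
    _ = θ * ((k : ℝ) + 1 / 2) := by ring
  -- φ > a means i ≥ k + 1
  have hik : (k : ℝ) + 1 ≤ (i : ℝ) := by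
    rw [hφi, hak] at hgt
    have : (k : ℝ) < (i : ℝ) := by
      have := (div_lt_div_iff_of_pos_right hTr).mp hgt
      nlinarith
    exact_mod_cast Nat.succ_le_of_lt (by exact_mod_cast this)
  have hvT : vT = (y - φ) * (T : ℝ) + θ / 2 := by
    rw [hid]; field_simp; ring
  have hφT : θ * ((k : ℝ) + 1) ≤ φ * (T : ℝ) := by
    rw [hφi, div_mul_cancel₀ _ (ne_of_gt hTr)]
    nlinarith
  nlinarith [hvT, hφT, hy]
end

section
/- Even-spike-timing closed form: Let θ > 0, T ∈ ℕ with T ≥ 1, and suppose the IF neuron receives constant input y per time-step, starts with v(0) = θ/2, never has its potential go below 0, and fires according to the floor rule. If 0 ≤ y < θ, then the number of spikes in T steps is ⌊(yT + θ/2)/θ⌋ when this quantity is at most T, i.e., φ(T) = clip( (θ/T)·⌊(yT + v(0))/θ⌋, 0, θ ). -/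
theorem even_timing_closed_form (θ : ℝ) (T : ℕ) (y : ℝ) (s v : ℕ → ℝ)
    (hθ : 0 < θ) (hT : 1 ≤ T)
    (hv0 : v 0 = θ / 2)
    (hs : ∀ t : ℕ, 1 ≤ t → s t = if v (t - 1) + y ≥ θ then 1 else 0)
    (hdyn : ∀ t : ℕ, 1 ≤ t → v t = v (t - 1) + y - θ * s t)
    (hnonneg : ∀ t : ℕ, 0 ≤ v t)
    (hy0 : 0 ≤ y) (hyθ : y < θ) :
    (θ / (T : ℝ)) * ∑ t ∈ Finset.Icc 1 T, s t
      = min (max ((θ / (T : ℝ)) * (⌊(y * (T : ℝ) + v 0) / θ⌋ : ℝ)) 0) θ := by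
  -- v stays below θ
  have hvlt : ∀ n : ℕ, v n < θ := by
    intro n
    induction n with
    | zero => rw [hv0]; linarith
    | succ n ih =>
      have h1 : 1 ≤ n + 1 := Nat.le_add_left 1 n
      have hd := hdyn (n+1) h1
      have hss := hs (n+1) h1
      simp only [Nat.add_sub_cancel] at hd hss
      by_cases hc : v n + y ≥ θ
      · rw [if_pos hc] at hss
        rw [hd, hss]; linarith
      · rw [if_neg hc] at hss
        rw [hd, hss]; push_neg at hc; linarith
  -- sum formula and integrality
  have hkey : ∀ n : ℕ, ∃ k : ℕ, k ≤ n ∧ (∑ t ∈ Finset.Icc 1 n, s t) = (k : ℝ) ∧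
      v n = v 0 + y * n - θ * k := by
    intro n
    induction n with
    | zero => exact ⟨0, le_refl 0, by simp, by simp⟩
    | succ n ih =>
      obtain ⟨k, hk1, hk2, hk3⟩ := ih
      have h1 : 1 ≤ n + 1 := Nat.le_add_left 1 n
      have hd := hdyn (n+1) h1
      have hss := hs (n+1) h1
      simp only [Nat.add_sub_cancel] at hd hss
      have hsum : (∑ t ∈ Finset.Icc 1 (n+1), s t) = (∑ t ∈ Finset.Icc 1 n, s t) + s (n+1) :=
        Finset.sum_Icc_succ_top h1 s
      by_cases hc : v n + y ≥ θ
      · refine ⟨k + 1, by omega, ?_, ?_⟩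
        · rw [hsum, hk2, hss, if_pos hc]; push_cast; ring
        · rw [hd, hss, if_pos hc, hk3]; push_cast; ring
      · refine ⟨k, by omega, ?_, ?_⟩
        · rw [hsum, hk2, hss, if_neg hc]; ring
        · rw [hd, hss, if_neg hc, hk3]; push_cast; ring
  obtain ⟨k, hk1, hk2, hk3⟩ := hkey T
  have hvT0 := hnonneg T
  have hvTlt := hvlt T
  have hfloor : ⌊(y * (T : ℝ) + v 0) / θ⌋ = (k : ℤ) := by
    rw [Int.floor_eq_iff]
    constructor
    · rw [le_div_iff₀ hθ]; push_cast; linarith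
    · rw [div_lt_iff₀ hθ]; push_cast; linarith
  rw [hfloor, hk2]
  have hT0 : (0:ℝ) < T := by exact_mod_cast Nat.lt_of_lt_of_le Nat.zero_lt_one hT
  have hpos : 0 ≤ θ / (T:ℝ) * (k:ℝ) := by positivity
  have hle : θ / (T:ℝ) * (k:ℝ) ≤ θ := by
    have : θ / (T:ℝ) * (k:ℝ) ≤ θ / (T:ℝ) * (T:ℝ) := by
      apply mul_le_mul_of_nonneg_left (by exact_mod_cast hk1) (by positivity)
    rwa [div_mul_cancel₀ θ (ne_of_gt hT0)] at this
  push_cast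
  rw [max_eq_left hpos, min_eq_left hle]
end
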